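/- Let l ≥ 1, let ξ ∈ V_l, and let m ≥ 1, n ≥ 0 be integers. Then in ℓ²(W): h(ξ_{m,n}) = ξ_{m+1,n} + p·ξ_{m,n} + (L−1)·ξ_{m−1,n}. -/

import Mathlib

noncomputable section

open scoped ComplexInnerProductSpace

namespace UCoxMasa

/-- The universal Coxeter matrix on `Fin L`: all off-diagonal entries are `0` (representing ∞). -/
def Mat (L : ℕ) : CoxeterMatrix (Fin L) where
  M := fun i j => if i = j then 1 else 0
  isSymm := by
    ext i j
    by_cases h : i = j <;> simp [Matrix.transpose, h, eq_comm]
  diagonal := fun i => by simp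
  off_diagonal := fun i j h => by simp [h]

/-- The universal Coxeter group on `L` generators: free product of `L` copies of `ℤ/2ℤ`. -/
abbrev W (L : ℕ) : Type := (Mat L).Group

/-- The distinguished Coxeter system of `W L`. -/
def cs (L : ℕ) : CoxeterSystem (Mat L) (W L) := CoxeterMatrix.toCoxeterSystem (Mat L)

/-- The simple reflection associated to `i : Fin L`. -/
def σ {L : ℕ} (i : Fin L) : W L := (cs L).simple i

/-- Word length on `W L` with respect to the generating set of simple reflections. -/
def len {L : ℕ} (w : W L) : ℕ := (cs L).length w

/-- The Hilbert space `ℓ²(W)`. -/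
abbrev H (L : ℕ) : Type := lp (fun _ : W L => ℂ) 2

/-- The standard orthonormal basis vector `δ_w` of `ℓ²(W)`. -/
def δ {L : ℕ} (w : W L) : H L :=
  letI := Classical.decEq (W L)
  lp.single 2 w 1

/-- `V l`: the linear span of `{δ_w : ℓ(w) = l}`. -/
def V (L : ℕ) (l : ℕ) : Submodule ℂ (H L) :=
  Submodule.span ℂ {x : H L | ∃ w : W L, len w = l ∧ x = δ w}

/-- `S_l`: the linear span of `q_l(h V_{l-1}) ∪ q_l(R_h V_{l-1})`,
given the projections `Q`, the operator `h` and the right operator `Rh`. -/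
def Sl (L : ℕ) (Q : ℕ → (H L →L[ℂ] H L)) (h Rh : H L →L[ℂ] H L) (l : ℕ) :
    Submodule ℂ (H L) :=
  Submodule.span ℂ
    ({x : H L | ∃ y ∈ V L (l - 1), x = Q l (h y)} ∪
      {x : H L | ∃ y ∈ V L (l - 1), x = Q l (Rh y)})

-- Auxiliary normal form theory
variable {L : ℕ}

abbrev X (L : ℕ) : Type := {ω : List (Fin L) // ω.Chain' (· ≠ ·)}

def flipl (i : Fin L) : List (Fin L) → List (Fin L)
  | [] => [i]
  | j :: t => if i = j then t else i :: j :: t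

lemma chain'_flipl (i : Fin L) {ω : List (Fin L)} (h : ω.Chain' (· ≠ ·)) :
    (flipl i ω).Chain' (· ≠ ·) := by
  match ω with
  | [] => simp [flipl, List.Chain']
  | j :: t =>
    by_cases hij : i = j
    · simp only [flipl, if_pos hij]
      exact h.tail
    · simp only [flipl, if_neg hij]
      exact List.isChain_cons_cons.mpr ⟨hij, h⟩

lemma flipl_flipl (i : Fin L) {ω : List (Fin L)} (h : ω.Chain' (· ≠ ·)) :
    flipl i (flipl i ω) = ω := by
  match ω with
  | [] => simp [flipl]
  | j :: t =>
    by_cases hij : i = j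
    · subst hij
      match t, h with
      | [], _ => simp [flipl]
      | k :: t', h =>
        have hik : i ≠ k := (List.isChain_cons_cons.mp h).1
        simp [flipl, hik]
    · simp [flipl, hij]

def flipX (i : Fin L) : X L → X L := fun x => ⟨flipl i x.1, chain'_flipl i x.2⟩

lemma flipX_invol (i : Fin L) : Function.Involutive (flipX i) := by
  intro x
  exact Subtype.ext (flipl_flipl i x.2)

def flipE (i : Fin L) : Equiv.Perm (X L) := (flipX_invol i).toPerm

lemma liftable : CoxeterMatrix.IsLiftable (Mat L) (fun i => (flipE i : Equiv.Perm (X L))) := by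
  intro i j
  by_cases hij : i = j
  · subst hij
    have h1 : (Mat L) i i = 1 := by simp [Mat, CoxeterMatrix.diagonal]
    rw [h1, pow_one]
    refine Equiv.ext fun x => ?_
    simp only [Equiv.Perm.mul_apply, Equiv.Perm.one_apply]
    exact flipX_invol i x
  · have h0 : (Mat L) i j = 0 := by
      show (if i = j then 1 else 0) = 0
      simp [hij]
    rw [h0, pow_zero]

def ρ : W L →* Equiv.Perm (X L) := (cs L).lift ⟨fun i => flipE i, liftable⟩

lemma ρ_simple (i : Fin L) : (ρ (σ i) : Equiv.Perm (X L)) = flipE i :=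
  (cs L).lift_apply_simple liftable i

def emptyX : X L := ⟨[], List.isChain_nil⟩

def nf (w : W L) : List (Fin L) := ((ρ w) emptyX).1

lemma chain'_nf (w : W L) : (nf w).Chain' (· ≠ ·) := ((ρ w) emptyX).2

lemma wordProd_flipl (i : Fin L) (ω : List (Fin L)) :
    (cs L).wordProd (flipl i ω) = (cs L).simple i * (cs L).wordProd ω := by
  match ω with
  | [] => simp [flipl]
  | j :: t =>
    by_cases hij : i = j
    · subst hij
      rw [CoxeterSystem.wordProd_cons, ← mul_assoc, (cs L).simple_mul_simple_self, one_mul]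
      simp [flipl]
    · simp only [flipl, if_neg hij, CoxeterSystem.wordProd_cons]

lemma flipE_apply (i : Fin L) (x : X L) : flipE i x = flipX i x := rfl

lemma wordProd_ρ (w : W L) (x : X L) :
    (cs L).wordProd ((ρ w x).1) = w * (cs L).wordProd x.1 := by
  induction w using CoxeterSystem.simple_induction_left (cs := cs L) with
  | one => simp
  | mul_simple_left w i ih =>
    have hx : ρ ((cs L).simple i * w) x = flipX i (ρ w x) := by
      rw [map_mul]
      have h1 : (ρ ((cs L).simple i) : Equiv.Perm (X L)) = flipE i := ρ_simple i
      rw [Equiv.Perm.mul_apply, h1, flipE_apply]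
    rw [hx]
    show (cs L).wordProd (flipl i ((ρ w x)).1) = _
    rw [wordProd_flipl, ih, mul_assoc]

lemma wordProd_nf (w : W L) : (cs L).wordProd (nf w) = w := by
  have := wordProd_ρ w emptyX
  simpa [nf, emptyX] using this

lemma length_flipl_le (i : Fin L) (ω : List (Fin L)) :
    (flipl i ω).length ≤ ω.length + 1 := by
  match ω with
  | [] => simp [flipl]
  | j :: t =>
    by_cases hij : i = j <;> simp [flipl, hij] <;> omega

lemma length_ρ_wordProd_le (ω : List (Fin L)) (x : X L) :
    ((ρ ((cs L).wordProd ω) x).1).length ≤ ω.length + x.1.length := by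
  induction ω generalizing x with
  | nil => simp
  | cons i t ih =>
    rw [CoxeterSystem.wordProd_cons, map_mul]
    have h1 : (ρ ((cs L).simple i) : Equiv.Perm (X L)) = flipE i := ρ_simple i
    simp only [Equiv.Perm.mul_apply, h1]
    have h2 : (flipE i (ρ ((cs L).wordProd t) x)).1 = flipl i ((ρ ((cs L).wordProd t) x)).1 := rfl
    rw [h2]
    have h3 := length_flipl_le i ((ρ ((cs L).wordProd t) x)).1
    have h4 := ih x
    simp only [List.length_cons]
    omega

lemma length_nf (w : W L) : (nf w).length = len w := by
  apply le_antisymm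
  · obtain ⟨ω, hlen, rfl⟩ := (cs L).exists_reduced_word w
    have := length_ρ_wordProd_le ω (emptyX (L := L))
    simpa [nf, emptyX, hlen.eq, len] using this
  · have := (cs L).length_wordProd_le (nf w)
    rw [wordProd_nf] at this
    exact this

lemma nf_wordProd {ω : List (Fin L)} (h : ω.Chain' (· ≠ ·)) :
    nf ((cs L).wordProd ω) = ω := by
  induction ω with
  | nil => simp [nf, emptyX]
  | cons i t ih =>
    rw [CoxeterSystem.wordProd_cons, nf, map_mul]
    have h1 : (ρ ((cs L).simple i) : Equiv.Perm (X L)) = flipE i := ρ_simple i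
    simp only [Equiv.Perm.mul_apply, h1]
    have ht : ((ρ ((cs L).wordProd t)) (emptyX (L := L))).1 = t := ih h.tail
    have h2 : (flipE i (ρ ((cs L).wordProd t) emptyX)).1
        = flipl i ((ρ ((cs L).wordProd t) emptyX)).1 := rfl
    rw [h2, ht]
    match t, h with
    | [], _ => simp [flipl]
    | k :: t', h =>
      have hik : i ≠ k := (List.isChain_cons_cons.mp h).1
      simp [flipl, hik]

lemma len_wordProd {ω : List (Fin L)} (h : ω.Chain' (· ≠ ·)) :
    len ((cs L).wordProd ω) = ω.length := by
  conv_rhs => rw [← nf_wordProd h]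
  exact (length_nf _).symm

lemma chain'_of_len_eq {ω : List (Fin L)} (h : len ((cs L).wordProd ω) = ω.length) :
    ω.Chain' (· ≠ ·) := by
  induction ω with
  | nil => exact List.isChain_nil
  | cons i t ih =>
    have hle : len ((cs L).wordProd t) ≤ t.length := (cs L).length_wordProd_le t
    have hsm : len ((cs L).wordProd (i :: t)) ≤ len ((cs L).wordProd t) + 1 := by
      rw [CoxeterSystem.wordProd_cons]
      have := (cs L).length_mul_le ((cs L).simple i) ((cs L).wordProd t)
      simp only [len, (cs L).length_simple] at this ⊢
      omega
    have hlt : len ((cs L).wordProd t) = t.length := by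
      simp only [List.length_cons] at h
      omega
    have ht : t.Chain' (· ≠ ·) := ih hlt
    refine List.isChain_cons.mpr ?_
    refine ⟨?_, ht⟩
    intro k hk hik
    cases t with
    | nil => simp at hk
    | cons k' t' =>
      simp only [List.head?_cons, Option.mem_def, Option.some.injEq] at hk
      subst hk
      subst hik
      have hcol : (cs L).wordProd (i :: i :: t') = (cs L).wordProd t' := by
        rw [CoxeterSystem.wordProd_cons, CoxeterSystem.wordProd_cons, ← mul_assoc,
          (cs L).simple_mul_simple_self, one_mul]
      rw [hcol] at h
      have := (cs L).length_wordProd_le t'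
      simp only [List.length_cons, len] at h hlt this
      omega

lemma nf_one : nf (1 : W L) = [] := by
  simpa using nf_wordProd (L := L) List.isChain_nil

lemma len_eq_zero_iff {w : W L} : len w = 0 ↔ w = 1 := (cs L).length_eq_zero_iff

lemma nf_mul {a b : W L} (h : len (a * b) = len a + len b) :
    nf (a * b) = nf a ++ nf b := by
  have hπ : (cs L).wordProd (nf a ++ nf b) = a * b := by
    rw [CoxeterSystem.wordProd_append, wordProd_nf, wordProd_nf]
  have hch : ((nf a) ++ (nf b)).Chain' (· ≠ ·) := by
    apply chain'_of_len_eq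
    rw [hπ]
    simp only [List.length_append, length_nf]
    omega
  rw [← hπ, nf_wordProd hch]

lemma ascent {w : W L} {s : Fin L} (h : (nf w).head? ≠ some s) :
    len (σ s * w) = len w + 1 ∧ nf (σ s * w) = s :: nf w := by
  have hch : (s :: nf w).Chain' (· ≠ ·) := by
    refine List.isChain_cons.mpr ?_
    refine ⟨?_, chain'_nf w⟩
    intro k hk
    rintro rfl
    exact h hk
  have hπ : (cs L).wordProd (s :: nf w) = σ s * w := by
    rw [CoxeterSystem.wordProd_cons, wordProd_nf]; rfl
  constructor
  · rw [← hπ, len_wordProd hch]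
    simp [length_nf]
  · rw [← hπ, nf_wordProd hch]

lemma descent {w : W L} {s : Fin L} (h : (nf w).head? = some s) :
    len (σ s * w) + 1 = len w ∧ nf (σ s * w) = (nf w).tail := by
  obtain ⟨t, ht⟩ : ∃ t, nf w = s :: t := by
    cases hnf : nf w with
    | nil => rw [hnf] at h; simp at h
    | cons k t =>
      rw [hnf] at h
      simp only [List.head?_cons, Option.some.injEq] at h
      exact ⟨t, by rw [h]⟩
  have hch : (s :: t).Chain' (· ≠ ·) := by rw [← ht]; exact chain'_nf w
  have hw' : w = (cs L).wordProd (s :: t) := by rw [← ht, wordProd_nf]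
  have hsw : σ s * w = (cs L).wordProd t := by
    rw [hw', CoxeterSystem.wordProd_cons, ← mul_assoc]
    show σ s * σ s * _ = _
    rw [(show σ s * σ s = 1 from (cs L).simple_mul_simple_self s), one_mul]
  have h1 : len (σ s * w) = t.length := by rw [hsw, len_wordProd (List.isChain_cons.mp hch).2]
  have h2 : len w = t.length + 1 := by
    rw [← length_nf, ht]; simp
  refine ⟨by omega, ?_⟩
  rw [hsw, nf_wordProd (List.isChain_cons.mp hch).2, ht]
  rfl

lemma isDescent_iff {w : W L} {s : Fin L} :
    len (σ s * w) < len w ↔ (nf w).head? = some s := by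
  constructor
  · intro hlt
    by_contra hne
    have := (ascent hne).1
    omega
  · intro h
    have := (descent h).1
    omega

lemma sph_finite (k : ℕ) : {w : W L | len w = k}.Finite := by
  have hinj : Set.InjOn nf {w : W L | len w = k} := by
    intro a _ b _ hab
    rw [← wordProd_nf a, ← wordProd_nf b, hab]
  have himg : (nf '' {w : W L | len w = k}) ⊆ {ω : List (Fin L) | ω.length = k} := by
    rintro _ ⟨w, hw, rfl⟩
    simp only [Set.mem_setOf_eq] at hw ⊢
    rw [length_nf, hw]
  exact Set.Finite.of_finite_image ((List.finite_length_eq _ k).subset himg) hinj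


-- Operator-level auxiliary lemmas

def LowS (L : ℕ) (N : ℕ) : Submodule ℂ (H L) :=
  Submodule.span ℂ {x : H L | ∃ u : W L, len u < N ∧ x = δ u}

lemma δ_mem_LowS {N : ℕ} {u : W L} (h : len u < N) : δ u ∈ LowS L N :=
  Submodule.subset_span ⟨u, h, rfl⟩

lemma LowS_mono {N N' : ℕ} (h : N ≤ N') : LowS L N ≤ LowS L N' :=
  Submodule.span_mono (fun x ⟨u, hu, hx⟩ => ⟨u, lt_of_lt_of_le hu h, hx⟩)

lemma len_mul_le (a b : W L) : len (a * b) ≤ len a + len b := (cs L).length_mul_le a b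

lemma len_simple_mul' (x : W L) (s : Fin L) :
    len (σ s * x) = len x + 1 ∨ len (σ s * x) + 1 = len x := (cs L).length_simple_mul x s

lemma len_mul_simple' (x : W L) (s : Fin L) :
    len (x * σ s) = len x + 1 ∨ len (x * σ s) + 1 = len x := (cs L).length_mul_simple x s

section OpAux

variable {p : ℝ} {T Tr : Fin L → H L →L[ℂ] H L}
  {Tw Twr : W L → H L →L[ℂ] H L} {Q : ℕ → H L →L[ℂ] H L}

/-- Any CLM mapping generators of `LowS K` into a submodule maps `LowS K` into it. -/
lemma LowS_le_comap {K : ℕ} {A : H L →L[ℂ] H L} {M : Submodule ℂ (H L)}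
    (hgen : ∀ u : W L, len u < K → A (δ u) ∈ M) : ∀ z ∈ LowS L K, A z ∈ M := by
  intro z hz
  have : LowS L K ≤ Submodule.comap (A : H L →ₗ[ℂ] H L) M := by
    rw [LowS, Submodule.span_le]
    rintro x ⟨u, hu, rfl⟩
    exact hgen u hu
  exact this hz

lemma T_low
    (hT : ∀ (s : Fin L) (w : W L),
      T s (δ w) =
        if len (σ s * w) < len w then δ (σ s * w) + (p : ℂ) • δ w else δ (σ s * w))
    (s : Fin L) {K : ℕ} {z : H L} (hz : z ∈ LowS L K) : T s z ∈ LowS L (K + 1) := by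
  refine LowS_le_comap (fun u hu => ?_) z hz
  rw [hT]
  have hlen : len (σ s * u) < K + 1 := by
    rcases len_simple_mul' u s with h | h <;> omega
  split
  · exact Submodule.add_mem _ (δ_mem_LowS hlen) (Submodule.smul_mem _ _ (δ_mem_LowS (by omega)))
  · exact δ_mem_LowS hlen

lemma Tr_low
    (hTr : ∀ (s : Fin L) (w : W L),
      Tr s (δ w) =
        if len (w * σ s) < len w then δ (w * σ s) + (p : ℂ) • δ w else δ (w * σ s))
    (s : Fin L) {K : ℕ} {z : H L} (hz : z ∈ LowS L K) : Tr s z ∈ LowS L (K + 1) := by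
  refine LowS_le_comap (fun u hu => ?_) z hz
  rw [hTr]
  have hlen : len (u * σ s) < K + 1 := by
    rcases len_mul_simple' u s with h | h <;> omega
  split
  · exact Submodule.add_mem _ (δ_mem_LowS hlen) (Submodule.smul_mem _ _ (δ_mem_LowS (by omega)))
  · exact δ_mem_LowS hlen

lemma Tw_top
    (hT : ∀ (s : Fin L) (w : W L),
      T s (δ w) =
        if len (σ s * w) < len w then δ (σ s * w) + (p : ℂ) • δ w else δ (σ s * w))
    (hTw1 : Tw 1 = 1)
    (hTwrec : ∀ (s : Fin L) (w : W L), len (σ s * w) < len w →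
      Tw w = T s ∘L Tw (σ s * w)) :
    ∀ (v u : W L),
      Tw v (δ u) - (if len (v * u) = len v + len u then δ (v * u) else 0)
        ∈ LowS L (len v + len u) := by
  suffices Hk : ∀ (k : ℕ) (v u : W L), len v = k →
      Tw v (δ u) - (if len (v * u) = len v + len u then δ (v * u) else 0)
        ∈ LowS L (len v + len u) by
    intro v u; exact Hk (len v) v u rfl
  intro k
  induction k with
  | zero =>
    intro v u hv
    have hv1 : v = 1 := len_eq_zero_iff.mp hv
    subst hv1
    rw [hTw1]
    have h0 : len (1 : W L) = 0 := len_eq_zero_iff.mpr rfl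
    simp only [ContinuousLinearMap.one_apply, one_mul, h0, zero_add, if_pos rfl]
    simp
  | succ k ih =>
    intro v u hv
    have hvne : v ≠ 1 := by
      intro hv1; rw [hv1] at hv; simp [len, (cs L).length_one] at hv
    obtain ⟨s, hs⟩ := (cs L).exists_leftDescent_of_ne_one hvne
    have hdesc : len (σ s * v) < len v := hs
    set v' := σ s * v with hv'def
    have hvv' : v = σ s * v' := by
      rw [hv'def, ← mul_assoc]
      rw [(show σ s * σ s = 1 from (cs L).simple_mul_simple_self s), one_mul]
    have hlenv' : len v' = k := by
      have h := len_simple_mul' v s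
      rw [← hv'def] at h
      rcases h with h | h <;> omega
    have hrec : Tw v = T s ∘L Tw v' := hTwrec s v hdesc
    have hIH := ih v' u hlenv'
    rw [hlenv'] at hIH
    set z' := Tw v' (δ u) - (if len (v' * u) = k + len u then δ (v' * u) else 0) with hz'
    have hTwv' : Tw v' (δ u) = (if len (v' * u) = k + len u then δ (v' * u) else 0) + z' := by
      rw [hz']; abel
    rw [hrec, ContinuousLinearMap.comp_apply, hTwv', map_add]
    have hTsz' : T s z' ∈ LowS L (k + len u + 1) := T_low hT s hIH
    have hksucc : len v + len u = k + len u + 1 := by omega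
    by_cases hcond : len (v' * u) = k + len u
    · rw [if_pos hcond]
      rw [hT]
      have hvu : σ s * (v' * u) = v * u := by rw [← mul_assoc, ← hvv']
      by_cases hd2 : len (σ s * (v' * u)) < len (v' * u)
      · rw [if_pos hd2]
        have h1 : len (v * u) < k + len u := by
          rw [← hvu]; omega
        have hne : ¬ (len (v * u) = len v + len u) := by omega
        rw [if_neg hne, hvu]
        rw [sub_zero]
        refine Submodule.add_mem _ (Submodule.add_mem _ ?_ ?_) (LowS_mono (by omega) hTsz')
        · exact δ_mem_LowS (by omega)
        · exact Submodule.smul_mem _ _ (δ_mem_LowS (by omega))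
      · rw [if_neg hd2]
        have h1 : len (v * u) = len v + len u := by
          rcases len_simple_mul' (v' * u) s with h | h
          · rw [hvu] at h; omega
          · exfalso; apply hd2; omega
        rw [if_pos h1, hvu]
        have : δ (v * u) + T s z' - δ (v * u) = T s z' := by abel
        rw [this]
        exact LowS_mono (by omega) hTsz'
    · rw [if_neg hcond, map_zero, zero_add]
      have hlt : len (v' * u) < k + len u := by
        have := len_mul_le v' u; omega
      have h1 : len (v * u) < len v + len u := by
        calc len (v * u) = len (σ s * (v' * u)) := by rw [← mul_assoc, ← hvv']
          _ ≤ len (v' * u) + 1 := by rcases len_simple_mul' (v' * u) s with h | h <;> omega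
          _ < len v + len u := by omega
      rw [if_neg (by omega), sub_zero]
      exact LowS_mono (by omega) hTsz'

lemma Twr_top
    (hTr : ∀ (s : Fin L) (w : W L),
      Tr s (δ w) =
        if len (w * σ s) < len w then δ (w * σ s) + (p : ℂ) • δ w else δ (w * σ s))
    (hTwr1 : Twr 1 = 1)
    (hTwrrec : ∀ (s : Fin L) (w : W L), len (w * σ s) < len w →
      Twr w = Tr s ∘L Twr (w * σ s)) :
    ∀ (y u : W L),
      Twr y (δ u) - (if len (u * y) = len u + len y then δ (u * y) else 0)
        ∈ LowS L (len u + len y) := by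
  suffices Hk : ∀ (k : ℕ) (y u : W L), len y = k →
      Twr y (δ u) - (if len (u * y) = len u + len y then δ (u * y) else 0)
        ∈ LowS L (len u + len y) by
    intro y u; exact Hk (len y) y u rfl
  intro k
  induction k with
  | zero =>
    intro y u hy
    have hy1 : y = 1 := len_eq_zero_iff.mp hy
    subst hy1
    rw [hTwr1]
    have h0 : len (1 : W L) = 0 := len_eq_zero_iff.mpr rfl
    simp only [ContinuousLinearMap.one_apply, mul_one, h0, add_zero, if_pos rfl]
    simp
  | succ k ih =>
    intro y u hy
    have hyne : y ≠ 1 := by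
      intro hy1; rw [hy1] at hy; simp [len, (cs L).length_one] at hy
    obtain ⟨s, hs⟩ := (cs L).exists_rightDescent_of_ne_one hyne
    have hdesc : len (y * σ s) < len y := hs
    set y' := y * σ s with hy'def
    have hyy' : y = y' * σ s := by
      rw [hy'def, mul_assoc]
      rw [(show σ s * σ s = 1 from (cs L).simple_mul_simple_self s), mul_one]
    have hleny' : len y' = k := by
      have h := len_mul_simple' y s
      rw [← hy'def] at h
      rcases h with h | h <;> omega
    have hrec : Twr y = Tr s ∘L Twr y' := hTwrrec s y hdesc
    have hIH := ih y' u hleny'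
    rw [hleny'] at hIH
    set z' := Twr y' (δ u) - (if len (u * y') = len u + k then δ (u * y') else 0) with hz'
    have hTwy' : Twr y' (δ u) = (if len (u * y') = len u + k then δ (u * y') else 0) + z' := by
      rw [hz']; abel
    rw [hrec, ContinuousLinearMap.comp_apply, hTwy', map_add]
    have hTsz' : Tr s z' ∈ LowS L (len u + k + 1) := Tr_low hTr s hIH
    by_cases hcond : len (u * y') = len u + k
    · rw [if_pos hcond]
      rw [hTr]
      have hvu : (u * y') * σ s = u * y := by rw [mul_assoc, ← hyy']
      by_cases hd2 : len ((u * y') * σ s) < len (u * y')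
      · rw [if_pos hd2]
        have h1 : len (u * y) < len u + k := by
          rw [← hvu]; omega
        have hne : ¬ (len (u * y) = len u + len y) := by omega
        rw [if_neg hne, hvu]
        rw [sub_zero]
        refine Submodule.add_mem _ (Submodule.add_mem _ ?_ ?_) (LowS_mono (by omega) hTsz')
        · exact δ_mem_LowS (by omega)
        · exact Submodule.smul_mem _ _ (δ_mem_LowS (by omega))
      · rw [if_neg hd2]
        have h1 : len (u * y) = len u + len y := by
          rcases len_mul_simple' (u * y') s with h | h
          · rw [hvu] at h; omega
          · exfalso; apply hd2; omega
        rw [if_pos h1, hvu]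
        have : δ (u * y) + Tr s z' - δ (u * y) = Tr s z' := by abel
        rw [this]
        exact LowS_mono (by omega) hTsz'
    · rw [if_neg hcond, map_zero, zero_add]
      have hlt : len (u * y') < len u + k := by
        have := len_mul_le u y'; omega
      have h1 : len (u * y) < len u + len y := by
        calc len (u * y) = len ((u * y') * σ s) := by rw [mul_assoc, ← hyy']
          _ ≤ len (u * y') + 1 := by rcases len_mul_simple' (u * y') s with h | h <;> omega
          _ < len u + len y := by omega
      rw [if_neg (by omega), sub_zero]
      exact LowS_mono (by omega) hTsz'

lemma Tw_low
    (hT : ∀ (s : Fin L) (w : W L),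
      T s (δ w) =
        if len (σ s * w) < len w then δ (σ s * w) + (p : ℂ) • δ w else δ (σ s * w))
    (hTw1 : Tw 1 = 1)
    (hTwrec : ∀ (s : Fin L) (w : W L), len (σ s * w) < len w →
      Tw w = T s ∘L Tw (σ s * w))
    (v : W L) {K : ℕ} {z : H L} (hz : z ∈ LowS L K) : Tw v z ∈ LowS L (K + len v) := by
  refine LowS_le_comap (fun u hu => ?_) z hz
  have htop := Tw_top hT hTw1 hTwrec v u
  have : Tw v (δ u) = (if len (v * u) = len v + len u then δ (v * u) else 0) + (Tw v (δ u) - (if len (v * u) = len v + len u then δ (v * u) else 0)) := by abel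
  rw [this]
  refine Submodule.add_mem _ ?_ (LowS_mono (by omega) htop)
  split
  · exact δ_mem_LowS (by omega)
  · exact Submodule.zero_mem _

lemma Q_low
    (hQ : ∀ (l : ℕ) (w : W L), Q l (δ w) = if len w = l then δ w else 0)
    (N : ℕ) {z : H L} (hz : z ∈ LowS L N) : Q N z = 0 := by
  have : Q N z ∈ (⊥ : Submodule ℂ (H L)) := by
    refine LowS_le_comap (fun u hu => ?_) z hz
    rw [hQ]
    rw [if_neg (by omega)]
    exact Submodule.zero_mem _
  simpa using this

end OpAux

-- Sums over spheres and the combinatorial core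

def Sph (L : ℕ) (k : ℕ) : Finset (W L) := (sph_finite (L := L) k).toFinset

lemma mem_Sph {k : ℕ} {w : W L} : w ∈ Sph L k ↔ len w = k := Set.Finite.mem_toFinset _

lemma op_tsum_eq (A : W L → (H L →L[ℂ] H L)) (k : ℕ) :
    ∑' w : {w : W L // len w = k}, A (w : W L) = ∑ w ∈ Sph L k, A w := by
  haveI : Finite {w : W L // len w = k} := Set.finite_coe_iff.mpr (sph_finite k)
  haveI := Fintype.ofFinite {w : W L // len w = k}
  rw [tsum_fintype]
  exact (Finset.sum_subtype (Sph L k) (fun x => mem_Sph) A).symm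

def Gk (L : ℕ) (w0 : W L) (n k N : ℕ) : Finset (W L × W L) :=
  ((Sph L k) ×ˢ (Sph L n)).filter fun pr => len (pr.1 * w0 * pr.2) = N

lemma mem_Gk {w0 : W L} {n k N : ℕ} {pr : W L × W L} :
    pr ∈ Gk L w0 n k N ↔ len pr.1 = k ∧ len pr.2 = n ∧ len (pr.1 * w0 * pr.2) = N := by
  simp [Gk, Finset.mem_filter, Finset.mem_product, mem_Sph, and_assoc]

lemma sigma_sigma (s : Fin L) (v : W L) : σ s * (σ s * v) = v := by
  rw [← mul_assoc, (show σ s * σ s = 1 from (cs L).simple_mul_simple_self s), one_mul]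

lemma len_ge_one_ne_one {x : W L} {k : ℕ} (hx : len x = k) (hk : 1 ≤ k) : x ≠ 1 := by
  intro h
  rw [h] at hx
  have : len (1 : W L) = 0 := len_eq_zero_iff.mpr rfl
  omega

lemma nf_ne_nil {x : W L} (hx : x ≠ 1) : nf x ≠ [] := by
  intro h
  apply hx
  have h2 := wordProd_nf x
  rw [h, CoxeterSystem.wordProd_nil] at h2
  exact h2.symm

/-- Head of the normal form, with a default. -/
def hd (i₀ : Fin L) (x : W L) : Fin L := ((nf x).head?).getD i₀

lemma head?_eq_hd {x : W L} (hx : x ≠ 1) (i₀ : Fin L) :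
    (nf x).head? = some (hd i₀ x) := by
  have hne := nf_ne_nil hx
  cases h : nf x with
  | nil => exact absurd h hne
  | cons a t => simp [hd, h]

lemma split3 {w0 : W L} {l : ℕ} (hw0 : len w0 = l) {v y : W L} {k n : ℕ}
    (hv : len v = k) (hy : len y = n) (hred : len (v * w0 * y) = k + n + l) :
    len (v * w0) = k + l ∧ len (w0 * y) = l + n ∧
      nf (v * w0 * y) = nf v ++ nf w0 ++ nf y := by
  have h1 := len_mul_le (v * w0) y
  have h2 := len_mul_le v w0
  have h3 : len (v * w0) = k + l := by omega
  have h5 := len_mul_le v (w0 * y)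
  have h6 := len_mul_le w0 y
  have h7 : len (v * (w0 * y)) = len (v * w0 * y) := by rw [mul_assoc]
  have h8 : len (w0 * y) = l + n := by omega
  refine ⟨h3, h8, ?_⟩
  rw [nf_mul (by omega : len ((v * w0) * y) = len (v * w0) + len y),
    nf_mul (by omega : len (v * w0) = len v + len w0)]

lemma triple_ascent {w0 : W L} {l : ℕ} (i₀ : Fin L) (hw0 : len w0 = l) (hl : 1 ≤ l)
    {v y : W L} {k n : ℕ} (hv : len v = k) (hy : len y = n)
    (hred : len (v * w0 * y) = k + n + l) {s : Fin L}
    (hs : s ≠ hd i₀ (v * w0 * y)) :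
    len (σ s * v) = k + 1 ∧ len ((σ s * v) * w0 * y) = (k + 1) + n + l ∧
      hd i₀ ((σ s * v) * w0 * y) = s ∧ hd i₀ (σ s * v) = s := by
  have hxne : (v * w0 * y) ≠ 1 := len_ge_one_ne_one hred (by omega)
  have hsplit := split3 hw0 hv hy hred
  have hw0nil : nf w0 ≠ [] := nf_ne_nil (len_ge_one_ne_one hw0 hl)
  have hdx : (nf (v * w0 * y)).head? = some (hd i₀ (v * w0 * y)) := head?_eq_hd hxne i₀
  have hhead : (nf (v * w0 * y)).head? = ((nf v) ++ (nf w0)).head? := by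
    rw [hsplit.2.2]
    refine List.head?_append_of_ne_nil _ ?_
    intro hc
    exact hw0nil (List.append_eq_nil_iff.mp hc).2
  have hvhead : (nf v).head? ≠ some s := by
    intro hcontr
    have hne : nf v ≠ [] := by
      intro h0; rw [h0] at hcontr; simp at hcontr
    apply hs
    have h4 : (nf v ++ nf w0).head? = some s := by
      rw [List.head?_append_of_ne_nil _ hne]; exact hcontr
    have h5 : some (hd i₀ (v * w0 * y)) = some s := by rw [← hdx, hhead, h4]
    exact (Option.some.injEq _ _ ▸ h5).symm
  have hasc := ascent hvhead
  have hassoc : (σ s * v) * w0 * y = σ s * (v * w0 * y) := by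
    simp [mul_assoc]
  have hxhead : (nf (v * w0 * y)).head? ≠ some s := by
    rw [hdx]
    intro hc
    exact hs ((Option.some.injEq _ _ ▸ hc).symm)
  have hascx := ascent hxhead
  refine ⟨by rw [hasc.1, hv], ?_, ?_, ?_⟩
  · rw [hassoc, hascx.1, hred]; omega
  · rw [hd, hassoc, hascx.2]; simp
  · rw [hd, hasc.2]; simp

lemma triple_descent {w0 : W L} {l : ℕ} (i₀ : Fin L) (hw0 : len w0 = l) (hl : 1 ≤ l)
    {v y : W L} {k n : ℕ} (hv : len v = k) (hy : len y = n)
    (hred : len (v * w0 * y) = k + n + l) (hk : 1 ≤ k) :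
    hd i₀ (v * w0 * y) = hd i₀ v ∧
    len (σ (hd i₀ v) * v) = k - 1 ∧
    len ((σ (hd i₀ v) * v) * w0 * y) = (k - 1) + n + l ∧
    hd i₀ v ≠ hd i₀ ((σ (hd i₀ v) * v) * w0 * y) := by
  set s := hd i₀ v with hs_def
  have hvne : v ≠ 1 := len_ge_one_ne_one hv hk
  have hvh : (nf v).head? = some s := head?_eq_hd hvne i₀
  have hxne : v * w0 * y ≠ 1 := len_ge_one_ne_one hred (by omega)
  have hsplit := split3 hw0 hv hy hred
  have hvnil : nf v ≠ [] := nf_ne_nil hvne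
  have hw0nil : nf w0 ≠ [] := nf_ne_nil (len_ge_one_ne_one hw0 hl)
  have hD0 : hd i₀ (v * w0 * y) = s := by
    rw [hd, hsplit.2.2, List.head?_append_of_ne_nil _ (by
      intro hc; exact hvnil (List.append_eq_nil_iff.mp hc).1),
      List.head?_append_of_ne_nil _ hvnil, hvh]
    rfl
  have hdesc := descent hvh
  have hD1 : len (σ s * v) = k - 1 := by omega
  have hxh : (nf (v * w0 * y)).head? = some s := by
    rw [head?_eq_hd hxne i₀, hD0]
  have hdescx := descent hxh
  have hassoc : (σ s * v) * w0 * y = σ s * (v * w0 * y) := by simp [mul_assoc]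
  have hD2 : len ((σ s * v) * w0 * y) = (k - 1) + n + l := by
    rw [hassoc]; omega
  refine ⟨hD0, hD1, hD2, ?_⟩
  -- D3
  obtain ⟨t, ht⟩ : ∃ t, nf v = s :: t := by
    cases hnf : nf v with
    | nil => exact absurd hnf hvnil
    | cons a t =>
      rw [hnf] at hvh
      simp only [List.head?_cons, Option.some.injEq] at hvh
      exact ⟨t, by rw [hvh]⟩
  have hsplit' := split3 hw0 hD1 hy hD2
  have hnfx' : nf ((σ s * v) * w0 * y) = t ++ nf w0 ++ nf y := by
    rw [hsplit'.2.2, hdesc.2, ht]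
    rfl
  have hchx : ((nf v ++ nf w0) ++ nf y).Chain' (· ≠ ·) := by
    have := chain'_nf (v * w0 * y)
    rwa [hsplit.2.2] at this
  have hchvu : (nf v ++ nf w0).Chain' (· ≠ ·) := (List.isChain_append.mp hchx).1
  have hchcons : (s :: (t ++ nf w0)).Chain' (· ≠ ·) := by
    rw [ht] at hchvu
    exact hchvu
  have htu : t ++ nf w0 ≠ [] := by
    intro hc; exact hw0nil (List.append_eq_nil_iff.mp hc).2
  obtain ⟨c, tu, hc⟩ : ∃ c tu, t ++ nf w0 = c :: tu := by
    cases hcc : t ++ nf w0 with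
    | nil => exact absurd hcc htu
    | cons c tu => exact ⟨c, tu, rfl⟩
  have hsc : s ≠ c := by
    have := List.isChain_cons.mp hchcons
    exact this.1 c (by rw [hc]; rfl)
  have : hd i₀ ((σ s * v) * w0 * y) = c := by
    rw [hd, hnfx', List.head?_append_of_ne_nil _ (by rw [hc]; simp), hc]
    rfl
  rw [this]
  exact hsc

lemma sumA_eq {w0 : W L} {l : ℕ} (i₀ : Fin L) (hw0 : len w0 = l) (hl : 1 ≤ l)
    (m n : ℕ) :
    (∑ pr ∈ Gk L w0 n m (m + n + l),
      ∑ s ∈ Finset.univ.erase (hd i₀ (pr.1 * w0 * pr.2)), δ (σ s * (pr.1 * w0 * pr.2)))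
      = ∑ pr ∈ Gk L w0 n (m + 1) ((m + 1) + n + l), δ (pr.1 * w0 * pr.2) := by
  rw [Finset.sum_sigma']
  refine Finset.sum_nbij' (i := fun x => (σ x.2 * x.1.1, x.1.2))
    (j := fun pr => ⟨(σ (hd i₀ pr.1) * pr.1, pr.2), hd i₀ pr.1⟩) ?_ ?_ ?_ ?_ ?_
  · rintro ⟨⟨v, y⟩, s⟩ hmem
    rw [Finset.mem_sigma] at hmem
    obtain ⟨hpr, hserase⟩ := hmem
    rw [mem_Gk] at hpr
    obtain ⟨hv, hy, hred⟩ := hpr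
    have hs : s ≠ hd i₀ (v * w0 * y) := (Finset.mem_erase.mp hserase).1
    have hA := triple_ascent i₀ hw0 hl hv hy hred hs
    rw [mem_Gk]
    exact ⟨hA.1, hy, hA.2.1⟩
  · rintro ⟨v', y⟩ hmem
    rw [mem_Gk] at hmem
    obtain ⟨hv', hy, hred⟩ := hmem
    have hD := triple_descent i₀ hw0 hl hv' hy hred (by omega)
    rw [Finset.mem_sigma]
    constructor
    · rw [mem_Gk]
      refine ⟨by rw [hD.2.1]; omega, hy, ?_⟩
      rw [hD.2.2.1]
      omega
    · exact Finset.mem_erase.mpr ⟨hD.2.2.2, Finset.mem_univ _⟩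
  · rintro ⟨⟨v, y⟩, s⟩ hmem
    rw [Finset.mem_sigma] at hmem
    obtain ⟨hpr, hserase⟩ := hmem
    rw [mem_Gk] at hpr
    obtain ⟨hv, hy, hred⟩ := hpr
    have hs : s ≠ hd i₀ (v * w0 * y) := (Finset.mem_erase.mp hserase).1
    have hA := triple_ascent i₀ hw0 hl hv hy hred hs
    show (⟨(σ (hd i₀ (σ s * v)) * (σ s * v), y), hd i₀ (σ s * v)⟩ :
      (_ : W L × W L) × Fin L) = ⟨(v, y), s⟩
    rw [hA.2.2.2, sigma_sigma]
  · rintro ⟨v', y⟩ hmem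
    rw [mem_Gk] at hmem
    show (σ (hd i₀ v') * (σ (hd i₀ v') * v'), y) = (v', y)
    rw [sigma_sigma]
  · rintro ⟨⟨v, y⟩, s⟩ _
    show δ (σ s * (v * w0 * y)) = δ ((σ s * v) * w0 * y)
    rw [show (σ s * v) * w0 * y = σ s * (v * w0 * y) by simp [mul_assoc]]

lemma sumB_eq {w0 : W L} {l : ℕ} (i₀ : Fin L) (hL : 3 ≤ L) (hw0 : len w0 = l) (hl : 1 ≤ l)
    (m n : ℕ) (hm : 1 ≤ m) :
    (∑ pr ∈ Gk L w0 n m (m + n + l),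
        δ (σ (hd i₀ (pr.1 * w0 * pr.2)) * (pr.1 * w0 * pr.2)))
      = ((L : ℂ) - 1) • ∑ pr ∈ Gk L w0 n (m - 1) ((m - 1) + n + l), δ (pr.1 * w0 * pr.2) := by
  classical
  set φ : W L × W L → W L × W L := fun pr => (σ (hd i₀ pr.1) * pr.1, pr.2) with hφ
  have hmaps : ∀ pr ∈ Gk L w0 n m (m + n + l), φ pr ∈ Gk L w0 n (m - 1) ((m - 1) + n + l) := by
    rintro ⟨v, y⟩ hmem
    rw [mem_Gk] at hmem
    obtain ⟨hv, hy, hred⟩ := hmem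
    have hD := triple_descent i₀ hw0 hl hv hy hred (by omega)
    rw [mem_Gk]
    exact ⟨hD.2.1, hy, hD.2.2.1⟩
  have hval : ∀ pr ∈ Gk L w0 n m (m + n + l),
      δ (σ (hd i₀ (pr.1 * w0 * pr.2)) * (pr.1 * w0 * pr.2))
        = δ ((φ pr).1 * w0 * (φ pr).2) := by
    rintro ⟨v, y⟩ hmem
    rw [mem_Gk] at hmem
    obtain ⟨hv, hy, hred⟩ := hmem
    have hD := triple_descent i₀ hw0 hl hv hy hred (by omega)
    show δ (σ (hd i₀ (v * w0 * y)) * (v * w0 * y)) = δ ((σ (hd i₀ v) * v) * w0 * y)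
    rw [hD.1, show (σ (hd i₀ v) * v) * w0 * y = σ (hd i₀ v) * (v * w0 * y) by simp [mul_assoc]]
  rw [Finset.sum_congr rfl hval]
  rw [← Finset.sum_fiberwise_of_maps_to' hmaps (fun z => δ (z.1 * w0 * z.2))]
  have hcard : ∀ z ∈ Gk L w0 n (m - 1) ((m - 1) + n + l),
      ((Gk L w0 n m (m + n + l)).filter (fun pr => φ pr = z)).card = L - 1 := by
    rintro ⟨v'', y⟩ hz
    rw [mem_Gk] at hz
    obtain ⟨hv'', hy, hred''⟩ := hz
    have hcardmatch :
        ((Gk L w0 n m (m + n + l)).filter (fun pr => φ pr = (v'', y))).card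
          = (Finset.univ.erase (hd i₀ (v'' * w0 * y))).card := by
      refine Finset.card_nbij' (i := fun pr => hd i₀ pr.1)
        (j := fun s => (σ s * v'', y)) ?_ ?_ ?_ ?_
      · rintro ⟨v, y'⟩ hmem
        rw [Finset.mem_coe, Finset.mem_filter, mem_Gk] at hmem
        obtain ⟨⟨hv, hy', hred⟩, hfib⟩ := hmem
        have hD := triple_descent i₀ hw0 hl hv hy' hred (by omega)
        have hfib1 : σ (hd i₀ v) * v = v'' := congrArg Prod.fst hfib
        have hfib2 : y' = y := congrArg Prod.snd hfib
        refine Finset.mem_erase.mpr ⟨?_, Finset.mem_univ _⟩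
        have := hD.2.2.2
        rwa [hfib1, hfib2] at this
      · intro s hs
        have hsne : s ≠ hd i₀ (v'' * w0 * y) := (Finset.mem_erase.mp hs).1
        have hA := triple_ascent i₀ hw0 hl hv'' hy hred'' hsne
        rw [Finset.mem_coe, Finset.mem_filter, mem_Gk]
        refine ⟨⟨by rw [hA.1]; omega, hy, by rw [hA.2.1]; congr 1; omega⟩, ?_⟩
        show (σ (hd i₀ (σ s * v'')) * (σ s * v''), y) = (v'', y)
        rw [hA.2.2.2, sigma_sigma]
      · rintro ⟨v, y'⟩ hmem
        rw [Finset.mem_coe, Finset.mem_filter, mem_Gk] at hmem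
        obtain ⟨⟨hv, hy', hred⟩, hfib⟩ := hmem
        have hfib1 : σ (hd i₀ v) * v = v'' := congrArg Prod.fst hfib
        have hfib2 : y' = y := congrArg Prod.snd hfib
        show (σ (hd i₀ v) * v'', y) = (v, y')
        rw [← hfib1, sigma_sigma, hfib2]
      · intro s hs
        have hsne : s ≠ hd i₀ (v'' * w0 * y) := (Finset.mem_erase.mp hs).1
        have hA := triple_ascent i₀ hw0 hl hv'' hy hred'' hsne
        show hd i₀ (σ s * v'') = s
        exact hA.2.2.2
    rw [hcardmatch, Finset.card_erase_of_mem (Finset.mem_univ _), Finset.card_univ,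
      Fintype.card_fin]
  calc ∑ z ∈ Gk L w0 n (m - 1) ((m - 1) + n + l),
        ∑ _pr ∈ (Gk L w0 n m (m + n + l)).filter (fun pr => φ pr = z), δ (z.1 * w0 * z.2)
      = ∑ z ∈ Gk L w0 n (m - 1) ((m - 1) + n + l), (L - 1 : ℕ) • δ (z.1 * w0 * z.2) := by
        refine Finset.sum_congr rfl fun z hz => ?_
        rw [Finset.sum_const, hcard z hz]
    _ = ((L : ℂ) - 1) • ∑ pr ∈ Gk L w0 n (m - 1) ((m - 1) + n + l), δ (pr.1 * w0 * pr.2) := by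
        rw [Finset.smul_sum]
        refine Finset.sum_congr rfl fun z _ => ?_
        rw [← Nat.cast_smul_eq_nsmul ℂ (L - 1), Nat.cast_sub (by omega), Nat.cast_one]

-- Top-degree term extraction and the ξ formula

section XiFormula

variable {p : ℝ} {T Tr : Fin L → H L →L[ℂ] H L}
  {Tw Twr : W L → H L →L[ℂ] H L} {Q : ℕ → H L →L[ℂ] H L}
  {h : H L →L[ℂ] H L}

lemma term_eq
    (hT : ∀ (s : Fin L) (w : W L),
      T s (δ w) =
        if len (σ s * w) < len w then δ (σ s * w) + (p : ℂ) • δ w else δ (σ s * w))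
    (hTw1 : Tw 1 = 1)
    (hTwrec : ∀ (s : Fin L) (w : W L), len (σ s * w) < len w →
      Tw w = T s ∘L Tw (σ s * w))
    (hTr : ∀ (s : Fin L) (w : W L),
      Tr s (δ w) =
        if len (w * σ s) < len w then δ (w * σ s) + (p : ℂ) • δ w else δ (w * σ s))
    (hTwr1 : Twr 1 = 1)
    (hTwrrec : ∀ (s : Fin L) (w : W L), len (w * σ s) < len w →
      Twr w = Tr s ∘L Twr (w * σ s))
    (hQ : ∀ (l : ℕ) (w : W L), Q l (δ w) = if len w = l then δ w else 0)
    {w0 : W L} {l : ℕ} (hw0 : len w0 = l) {v y : W L} {k n : ℕ}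
    (hv : len v = k) (hy : len y = n) :
    Q (k + n + l) (Tw v (Twr y (δ w0))) =
      if len (v * w0 * y) = k + n + l then δ (v * w0 * y) else 0 := by
  have h1 := Twr_top hTr hTwr1 hTwrrec y w0
  have hkey : Twr y (δ w0) =
      (if len (w0 * y) = len w0 + len y then δ (w0 * y) else 0) +
        (Twr y (δ w0) - (if len (w0 * y) = len w0 + len y then δ (w0 * y) else 0)) := by
    abel
  rw [hkey, map_add, map_add]
  have hz1 : Q (k + n + l) (Tw v (Twr y (δ w0) -
      (if len (w0 * y) = len w0 + len y then δ (w0 * y) else 0))) = 0 := by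
    refine Q_low hQ _ (LowS_mono ?_ (Tw_low hT hTw1 hTwrec v h1))
    omega
  rw [hz1, add_zero]
  by_cases hc : len (w0 * y) = len w0 + len y
  · rw [if_pos hc]
    have h2 := Tw_top hT hTw1 hTwrec v (w0 * y)
    have hkey2 : Tw v (δ (w0 * y)) =
        (if len (v * (w0 * y)) = len v + len (w0 * y) then δ (v * (w0 * y)) else 0) +
          (Tw v (δ (w0 * y)) -
            (if len (v * (w0 * y)) = len v + len (w0 * y) then δ (v * (w0 * y)) else 0)) := by
      abel
    rw [hkey2, map_add]
    have hz2 : Q (k + n + l) (Tw v (δ (w0 * y)) -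
        (if len (v * (w0 * y)) = len v + len (w0 * y) then δ (v * (w0 * y)) else 0)) = 0 := by
      refine Q_low hQ _ (LowS_mono ?_ h2)
      omega
    rw [hz2, add_zero]
    have hiff : len (v * (w0 * y)) = len v + len (w0 * y) ↔
        len (v * w0 * y) = k + n + l := by
      rw [← mul_assoc, hv, hc, hw0, hy]
      constructor <;> intro <;> omega
    by_cases hcc : len (v * w0 * y) = k + n + l
    · rw [if_pos (hiff.mpr hcc), if_pos hcc, hQ]
      rw [← mul_assoc]
      rw [if_pos hcc]
    · rw [if_neg (fun hcontra => hcc (hiff.mp hcontra)), if_neg hcc, map_zero]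
  · rw [if_neg hc, map_zero, map_zero]
    have hle1 := len_mul_le w0 y
    have hle2 := len_mul_le v (w0 * y)
    have hassoc : len (v * (w0 * y)) = len (v * w0 * y) := by rw [mul_assoc]
    rw [if_neg (by omega)]

lemma xi_formula
    (hT : ∀ (s : Fin L) (w : W L),
      T s (δ w) =
        if len (σ s * w) < len w then δ (σ s * w) + (p : ℂ) • δ w else δ (σ s * w))
    (hTw1 : Tw 1 = 1)
    (hTwrec : ∀ (s : Fin L) (w : W L), len (σ s * w) < len w →
      Tw w = T s ∘L Tw (σ s * w))
    (hTr : ∀ (s : Fin L) (w : W L),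
      Tr s (δ w) =
        if len (w * σ s) < len w then δ (w * σ s) + (p : ℂ) • δ w else δ (w * σ s))
    (hTwr1 : Twr 1 = 1)
    (hTwrrec : ∀ (s : Fin L) (w : W L), len (w * σ s) < len w →
      Twr w = Tr s ∘L Twr (w * σ s))
    (hQ : ∀ (l : ℕ) (w : W L), Q l (δ w) = if len w = l then δ w else 0)
    {hn hnr : ℕ → H L →L[ℂ] H L}
    (hhn : ∀ n : ℕ, hn n = ∑' w : {w : W L // len w = n}, Tw (w : W L))
    (hhnr : ∀ n : ℕ, hnr n = ∑' w : {w : W L // len w = n}, Twr (w : W L))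
    {w0 : W L} {l : ℕ} (hw0 : len w0 = l) (k n : ℕ) :
    Q (k + n + l) (hn k (hnr n (δ w0))) =
      ∑ pr ∈ Gk L w0 n k (k + n + l), δ (pr.1 * w0 * pr.2) := by
  rw [hhn k, hhnr n, op_tsum_eq, op_tsum_eq]
  simp only [ContinuousLinearMap.sum_apply, map_sum]
  rw [Finset.sum_comm]
  rw [Gk, Finset.sum_filter, Finset.sum_product]
  refine Finset.sum_congr rfl fun v hv => ?_
  refine Finset.sum_congr rfl fun y hy => ?_
  exact term_eq hT hTw1 hTwrec hTr hTwr1 hTwrrec hQ hw0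
    (mem_Sph.mp hv) (mem_Sph.mp hy)

lemma h_delta
    (hT : ∀ (s : Fin L) (w : W L),
      T s (δ w) =
        if len (σ s * w) < len w then δ (σ s * w) + (p : ℂ) • δ w else δ (σ s * w))
    (hh : h = ∑ s, T s) {x : W L} (hx : x ≠ 1) (i₀ : Fin L) :
    h (δ x) = (∑ s ∈ Finset.univ.erase (hd i₀ x), δ (σ s * x))
      + δ (σ (hd i₀ x) * x) + (p : ℂ) • δ x := by
  rw [hh, ContinuousLinearMap.sum_apply]
  rw [← Finset.sum_erase_add _ _ (Finset.mem_univ (hd i₀ x))]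
  rw [add_assoc]
  congr 1
  · refine Finset.sum_congr rfl fun s hs => ?_
    rw [hT, if_neg]
    rw [isDescent_iff, head?_eq_hd hx i₀]
    intro hc
    exact (Finset.mem_erase.mp hs).1 (Option.some.injEq _ _ ▸ hc).symm
  · rw [hT, if_pos]
    rw [isDescent_iff]
    exact head?_eq_hd hx i₀

end XiFormula

end UCoxMasa


namespace UCoxMasa

theorem statement4
    (L : ℕ) (hL : 3 ≤ L) (q p : ℝ) (hq : 0 < q) (hq1 : q ≤ 1)
    (hp : p = (q - 1) / Real.sqrt q)
    (T : Fin L → H L →L[ℂ] H L)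
    (hT : ∀ (s : Fin L) (w : W L),
      T s (δ w) =
        if len (σ s * w) < len w then δ (σ s * w) + (p : ℂ) • δ w else δ (σ s * w))
    (h : H L →L[ℂ] H L) (hh : h = ∑ s, T s)
    (Tw : W L → H L →L[ℂ] H L) (hTw1 : Tw 1 = 1)
    (hTwrec : ∀ (s : Fin L) (w : W L), len (σ s * w) < len w →
      Tw w = T s ∘L Tw (σ s * w))
    (hn : ℕ → H L →L[ℂ] H L)
    (hhn : ∀ n : ℕ, hn n = ∑' w : {w : W L // len w = n}, Tw (w : W L))
    (Tr : Fin L → H L →L[ℂ] H L)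
    (hTr : ∀ (s : Fin L) (w : W L),
      Tr s (δ w) =
        if len (w * σ s) < len w then δ (w * σ s) + (p : ℂ) • δ w else δ (w * σ s))
    (Twr : W L → H L →L[ℂ] H L) (hTwr1 : Twr 1 = 1)
    (hTwrrec : ∀ (s : Fin L) (w : W L), len (w * σ s) < len w →
      Twr w = Tr s ∘L Twr (w * σ s))
    (hnr : ℕ → H L →L[ℂ] H L)
    (hhnr : ∀ n : ℕ, hnr n = ∑' w : {w : W L // len w = n}, Twr (w : W L))
    (Q : ℕ → H L →L[ℂ] H L)
    (hQ : ∀ (l : ℕ) (w : W L), Q l (δ w) = if len w = l then δ w else 0)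
    (l : ℕ) (hl : 1 ≤ l) (ξ : H L) (hξmem : ξ ∈ V L l)
    (m n : ℕ) (hm : 1 ≤ m) :
    h (Q (m + n + l) (hn m (hnr n ξ))) =
      Q (m + 1 + n + l) (hn (m + 1) (hnr n ξ)) +
        (p : ℂ) • Q (m + n + l) (hn m (hnr n ξ)) +
          ((L : ℂ) - 1) • Q (m - 1 + n + l) (hn (m - 1) (hnr n ξ))    := by
  have i₀ : Fin L := ⟨0, by omega⟩
  induction hξmem using Submodule.span_induction with
  | mem x hx =>
    obtain ⟨w0, hw0, rfl⟩ := hx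
    have hXi := fun k => xi_formula hT hTw1 hTwrec hTr hTwr1 hTwrrec hQ hhn hhnr hw0 k n
    rw [hXi m, hXi (m + 1), hXi (m - 1)]
    rw [map_sum]
    have hstep : ∑ pr ∈ Gk L w0 n m (m + n + l), h (δ (pr.1 * w0 * pr.2))
        = ∑ pr ∈ Gk L w0 n m (m + n + l),
            ((∑ s ∈ Finset.univ.erase (hd i₀ (pr.1 * w0 * pr.2)),
                δ (σ s * (pr.1 * w0 * pr.2)))
              + δ (σ (hd i₀ (pr.1 * w0 * pr.2)) * (pr.1 * w0 * pr.2))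
              + (p : ℂ) • δ (pr.1 * w0 * pr.2)) :=
      Finset.sum_congr rfl fun pr hpr =>
        h_delta hT hh (len_ge_one_ne_one (mem_Gk.mp hpr).2.2 (by omega)) i₀
    rw [hstep, Finset.sum_add_distrib, Finset.sum_add_distrib]
    rw [sumA_eq i₀ hw0 hl m n, sumB_eq i₀ hL hw0 hl m n hm, ← Finset.smul_sum]
    abel
  | zero => simp
  | add a b ha hb hA hB =>
    simp only [map_add, smul_add] at *
    rw [hA, hB]
    abel
  | smul c a ha hA =>
    simp only [map_smul, smul_add] at *
    rw [hA]
    simp only [smul_add]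
    rw [smul_comm c ((p : ℝ) : ℂ), smul_comm c ((L : ℂ) - 1)]


end UCoxMasa
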